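/- (Generic case; original Formula 8.5.) Let X = (a_1, ..., a_m) be a finite list of nonzero vectors spanning ℂ^n and μ : {1,...,m} → ℂ. Define X_p := { i : ⟨a_i | p⟩ + μ_i = 0 } and P(X,μ) := { p ∈ ℂ^n : {a_i : i ∈ X_p} spans ℂ^n }. Assume the data are generic, i.e. for every p ∈ P(X,μ) the vectors {a_i : i ∈ X_p} are linearly independent (hence form a basis of ℂ^n). Then in the field K = ℂ(x_1,...,x_n) one has the identity ∏_{i=1}^m 1/(a_i + μ_i) = Σ_{p ∈ P(X,μ)} ( ∏_{i ∉ X_p} 1/(⟨a_i | p⟩ + μ_i) ) · ∏_{i ∈ X_p} 1/(a_i + μ_i). -/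

import Mathlib

open MvPolynomial

/-- The linear polynomial `∑ j, a j * x j ∈ ℂ[x_1, …, x_n]` attached to a vector `a ∈ ℂ^n`. -/
noncomputable def linForm {n : ℕ} (a : Fin n → ℂ) : MvPolynomial (Fin n) ℂ :=
  ∑ j, C (a j) * X j

/-- The element `a i + μ i` of the rational function field `K = ℂ(x_1, …, x_n)`. -/
noncomputable def affForm {n m : ℕ} (a : Fin m → (Fin n → ℂ)) (μ : Fin m → ℂ) (i : Fin m) :
    FractionRing (MvPolynomial (Fin n) ℂ) :=
  algebraMap (MvPolynomial (Fin n) ℂ) (FractionRing (MvPolynomial (Fin n) ℂ))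
    (linForm (a i) + C (μ i))

/-- `X_p`: the set of indices `i` such that `⟨a i | p⟩ + μ i = 0`. -/
def Xp {n m : ℕ} (a : Fin m → (Fin n → ℂ)) (μ : Fin m → ℂ) (p : Fin n → ℂ) : Set (Fin m) :=
  {i | (∑ j, a i j * p j) + μ i = 0}

/-- `X_p` as a finite set of indices. -/
noncomputable def XpFinset {n m : ℕ} (a : Fin m → (Fin n → ℂ)) (μ : Fin m → ℂ)
    (p : Fin n → ℂ) : Finset (Fin m) :=
  (Set.toFinite (Xp a μ p)).toFinset

/-- `P(X, μ)`: the points of the arrangement, i.e. the points `p` such that the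
vectors `{a i : i ∈ X_p}` span `ℂ^n`. -/
def armPoints {n m : ℕ} (a : Fin m → (Fin n → ℂ)) (μ : Fin m → ℂ) : Set (Fin n → ℂ) :=
  {p | Submodule.span ℂ (a '' Xp a μ p) = ⊤}

section AuxiliaryLemmas

variable {n m : ℕ}

lemma mem_Xp' {a : Fin m → (Fin n → ℂ)} {μ : Fin m → ℂ} {p : Fin n → ℂ} {i : Fin m} :
    i ∈ Xp a μ p ↔ (∑ j, a i j * p j) + μ i = 0 := Iff.rfl

lemma mem_XpFinset {a : Fin m → (Fin n → ℂ)} {μ : Fin m → ℂ} {p : Fin n → ℂ} {i : Fin m} :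
    i ∈ XpFinset a μ p ↔ (∑ j, a i j * p j) + μ i = 0 := by
  rw [XpFinset, Set.Finite.mem_toFinset]; exact Iff.rfl

/-- The pairing linear functional `v ↦ ∑ j, v j * d j`. -/
noncomputable def pairLin (d : Fin n → ℂ) : (Fin n → ℂ) →ₗ[ℂ] ℂ where
  toFun v := ∑ j, v j * d j
  map_add' x y := by simp [add_mul, Finset.sum_add_distrib]
  map_smul' r x := by simp [Finset.mul_sum, mul_assoc]

lemma eq_zero_of_pair {s : Set (Fin n → ℂ)} (hs : Submodule.span ℂ s = ⊤)
    {d : Fin n → ℂ} (h : ∀ v ∈ s, ∑ j, v j * d j = 0) : d = 0 := by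
  have hker : LinearMap.ker (pairLin d) = ⊤ := by
    rw [eq_top_iff, ← hs, Submodule.span_le]
    intro v hv
    simpa [pairLin, LinearMap.mem_ker] using h v hv
  funext j
  have := LinearMap.mem_ker.mp (hker ▸ Submodule.mem_top :
    (Pi.single j 1 : Fin n → ℂ) ∈ LinearMap.ker (pairLin d))
  simpa [pairLin, Pi.single_apply] using this

lemma linForm_sum_smul (c : Fin m → ℂ) (v : Fin m → (Fin n → ℂ)) :
    linForm (∑ i, c i • v i) = ∑ i, C (c i) * linForm (v i) := by
  unfold linForm
  have : ∀ i : Fin m, C (c i) * ∑ j, C (v i j) * X j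
      = ∑ j, C (c i * v i j) * (X j : MvPolynomial (Fin n) ℂ) := by
    intro i
    rw [Finset.mul_sum]
    exact Finset.sum_congr rfl fun j _ => by rw [map_mul, mul_assoc]
  simp only [this]
  rw [Finset.sum_comm]
  refine Finset.sum_congr rfl fun j _ => ?_
  rw [← Finset.sum_mul, ← map_sum]
  congr 2
  simp [Finset.sum_apply]

lemma linForm_add_C_ne_zero {a : Fin n → ℂ} (ha : a ≠ 0) (z : ℂ) :
    linForm a + C z ≠ 0 := by
  obtain ⟨j, hj⟩ : ∃ j, a j ≠ 0 := by
    by_contra h; push_neg at h; exact ha (funext h)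
  intro h
  have hc : coeff (Finsupp.single j 1) (linForm a + C z) = a j := by
    rw [coeff_add, coeff_C, if_neg (fun hs => by simpa using hs.symm)]
    unfold linForm
    rw [coeff_sum]
    simp only [coeff_C_mul, coeff_X']
    rw [Finset.sum_eq_single j ?_ (by simp)]
    · simp
    · intro k _ hk
      rw [if_neg, mul_zero]
      intro hs
      exact hk (by simpa [Finsupp.single_left_inj (one_ne_zero)] using hs)
  rw [h] at hc
  simp at hc
  exact hj hc.symm

lemma affForm_ne_zero {a : Fin m → (Fin n → ℂ)} {μ : Fin m → ℂ} {i : Fin m}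
    (ha : a i ≠ 0) : affForm a μ i ≠ 0 := by
  unfold affForm
  rw [map_ne_zero_iff _ (IsFractionRing.injective (MvPolynomial (Fin n) ℂ)
    (FractionRing (MvPolynomial (Fin n) ℂ)))]
  exact linForm_add_C_ne_zero ha (μ i)

lemma armPoints_finite (a : Fin m → (Fin n → ℂ)) (μ : Fin m → ℂ) :
    (armPoints a μ).Finite := by
  rw [← Set.finite_coe_iff]
  refine Finite.of_injective (fun q => XpFinset a μ q.1) ?_
  rintro ⟨q₁, hq₁⟩ ⟨q₂, hq₂⟩ h
  have h' : XpFinset a μ q₁ = XpFinset a μ q₂ := h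
  have hX : Xp a μ q₁ = Xp a μ q₂ := by
    ext i
    constructor <;> intro hi
    · exact mem_XpFinset.mp (by rw [← h']; exact mem_XpFinset.mpr hi)
    · exact mem_XpFinset.mp (by rw [h']; exact mem_XpFinset.mpr hi)
  have hd : q₁ - q₂ = 0 := by
    refine eq_zero_of_pair hq₁ ?_
    rintro v ⟨i, hi, rfl⟩
    have h1 : (∑ j, a i j * q₁ j) + μ i = 0 := hi
    have h2 : (∑ j, a i j * q₂ j) + μ i = 0 := by
      have : i ∈ Xp a μ q₂ := by rw [← hX]; exact hi
      exact this
    simp only [Pi.sub_apply, mul_sub, Finset.sum_sub_distrib]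
    linear_combination h1 - h2
  exact Subtype.ext (by rwa [sub_eq_zero] at hd)

/-- The evaluation linear map `p ↦ (⟨a i | p⟩)ᵢ`. -/
noncomputable def evalLin (a : Fin m → (Fin n → ℂ)) : (Fin n → ℂ) →ₗ[ℂ] (Fin m → ℂ) where
  toFun p := fun i => ∑ j, a i j * p j
  map_add' x y := by funext i; simp [mul_add, Finset.sum_add_distrib]
  map_smul' r x := by
    funext i
    simp only [Pi.smul_apply, smul_eq_mul, RingHom.id_apply, Finset.mul_sum]
    exact Finset.sum_congr rfl fun j _ => by ring

lemma exists_common_point {a : Fin m → (Fin n → ℂ)} {μ : Fin m → ℂ}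
    (h : ∀ c : Fin m → ℂ, ∑ i, c i • a i = 0 → ∑ i, c i * μ i = 0) :
    ∃ p : Fin n → ℂ, ∀ i, (∑ j, a i j * p j) + μ i = 0 := by
  by_contra hcon
  push_neg at hcon
  have hnm : (-μ) ∉ LinearMap.range (evalLin a) := by
    rintro ⟨p, hp⟩
    obtain ⟨i, hi⟩ := hcon p
    refine hi ?_
    have h2 := congrFun hp i
    simp only [evalLin, LinearMap.coe_mk, AddHom.coe_mk, Pi.neg_apply] at h2
    linear_combination h2
  obtain ⟨φ, hφ1, hφ2⟩ := (LinearMap.range (evalLin a)).exists_dual_map_eq_bot_of_notMem hnm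
    inferInstance
  set c : Fin m → ℂ := fun i => φ (fun j => if i = j then 1 else 0) with hc'
  have hφv : ∀ v : Fin m → ℂ, φ v = ∑ i, v i * c i := by
    intro v
    rw [LinearMap.pi_apply_eq_sum_univ φ v]
    exact Finset.sum_congr rfl fun i _ => by rw [smul_eq_mul]
  have hrel : ∑ i, c i • a i = 0 := by
    funext j
    have hz : φ (evalLin a (Pi.single j 1)) = 0 := by
      have hm : φ (evalLin a (Pi.single j 1)) ∈
          Submodule.map φ (LinearMap.range (evalLin a)) := ⟨_, ⟨_, rfl⟩, rfl⟩
      rw [hφ2] at hm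
      simpa using hm
    rw [hφv] at hz
    have he : ∀ i, evalLin a (Pi.single j 1) i = a i j := by
      intro i; simp [evalLin, Pi.single_apply, mul_ite, Finset.sum_ite_eq']
    simp only [he] at hz
    simpa [mul_comm] using hz
  have hμ0 : ∑ i, c i * μ i = 0 := h c hrel
  apply hφ1
  rw [hφv]
  have hng : ∑ i, (-μ) i * c i = -∑ i, μ i * c i := by
    simp [neg_mul]
  rw [hng, neg_eq_zero]
  simpa [mul_comm] using hμ0

/-- In ℂ: partial-fraction coefficient identity. -/
lemma coeff_identity {ι : Type*} [DecidableEq ι] (s : Finset ι) (c e : ι → ℂ)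
    (he0 : ∀ i ∈ s, e i ≠ 0) (hsum : ∑ i ∈ s, c i * e i = 1) :
    ∑ i ∈ s, c i * ∏ j ∈ s.erase i, (e j)⁻¹ = ∏ j ∈ s, (e j)⁻¹ := by
  have key : ∀ i ∈ s, ∏ j ∈ s.erase i, (e j)⁻¹ = e i * ∏ j ∈ s, (e j)⁻¹ := by
    intro i hi
    rw [← Finset.mul_prod_erase s (fun j => (e j)⁻¹) hi]
    rw [← mul_assoc, mul_inv_cancel₀ (he0 i hi), one_mul]
  calc ∑ i ∈ s, c i * ∏ j ∈ s.erase i, (e j)⁻¹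
      = ∑ i ∈ s, (c i * e i) * ∏ j ∈ s, (e j)⁻¹ := by
        refine Finset.sum_congr rfl fun i hi => ?_
        rw [key i hi]; ring
    _ = (∑ i ∈ s, c i * e i) * ∏ j ∈ s, (e j)⁻¹ := by rw [Finset.sum_mul]
    _ = ∏ j ∈ s, (e j)⁻¹ := by rw [hsum, one_mul]

/-- Base case: the family is linearly independent (and spans). -/
lemma indep_case (a : Fin m → (Fin n → ℂ)) (μ : Fin m → ℂ)
    (hspan : Submodule.span ℂ (Set.range a) = ⊤)
    (hind : LinearIndependent ℂ a) :
    ∏ i, (affForm a μ i)⁻¹ =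
      ∑ᶠ p ∈ armPoints a μ,
        algebraMap (MvPolynomial (Fin n) ℂ) (FractionRing (MvPolynomial (Fin n) ℂ))
            (C (∏ i ∈ (XpFinset a μ p)ᶜ, ((∑ j, a i j * p j) + μ i)⁻¹)) *
          ∏ i ∈ XpFinset a μ p, (affForm a μ i)⁻¹ := by
  have hevalapp : ∀ (p : Fin n → ℂ) i, evalLin a p i = ∑ j, a i j * p j := fun p i => rfl
  have hinj : Function.Injective (evalLin a) := by
    rw [← LinearMap.ker_eq_bot, eq_bot_iff]
    intro d hd
    rw [LinearMap.mem_ker] at hd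
    have : d = 0 := by
      refine eq_zero_of_pair hspan ?_
      rintro v ⟨i, rfl⟩
      rw [← hevalapp d i, hd]; rfl
    simp [this]
  have hcard : Module.finrank ℂ (Fin n → ℂ) = Module.finrank ℂ (Fin m → ℂ) := by
    have b : Module.Basis (Fin m) ℂ (Fin n → ℂ) := Module.Basis.mk hind (by rw [hspan])
    rw [Module.finrank_eq_card_basis b]
    simp
  have hsurj : Function.Surjective (evalLin a) :=
    (LinearMap.injective_iff_surjective_of_finrank_eq_finrank hcard).mp hinj
  obtain ⟨p₀, hp₀⟩ := hsurj (-μ)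
  have hp₀' : ∀ i, (∑ j, a i j * p₀ j) + μ i = 0 := by
    intro i
    have := congrFun hp₀ i
    rw [hevalapp] at this
    rw [this]; simp
  have hXp₀ : Xp a μ p₀ = Set.univ := by
    ext i; simpa [Xp] using hp₀' i
  have hp₀P : p₀ ∈ armPoints a μ := by
    show Submodule.span ℂ (a '' Xp a μ p₀) = ⊤
    rw [hXp₀, Set.image_univ, hspan]
  have hP : armPoints a μ = {p₀} := by
    ext q
    constructor
    · intro hq
      have hd : q - p₀ = 0 := by
        refine eq_zero_of_pair hq ?_
        rintro v ⟨i, hi, rfl⟩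
        have h1 : (∑ j, a i j * q j) + μ i = 0 := hi
        have h2 : (∑ j, a i j * p₀ j) + μ i = 0 := hp₀' i
        simp only [Pi.sub_apply, mul_sub, Finset.sum_sub_distrib]
        linear_combination h1 - h2
      have : q = p₀ := by rwa [sub_eq_zero] at hd
      simp [this]
    · intro hq
      rw [Set.mem_singleton_iff] at hq
      rw [hq]; exact hp₀P
  rw [hP, finsum_mem_singleton]
  have hXF : XpFinset a μ p₀ = Finset.univ := by
    ext i; simpa [mem_XpFinset] using hp₀' i
  rw [hXF]
  simp

/-- Characterisation of the points of the arrangement of the subfamily omitting index `i`. -/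
lemma armPoints_comp {m' : ℕ} (a : Fin (m' + 1) → (Fin n → ℂ)) (μ : Fin (m' + 1) → ℂ)
    (hgen : ∀ p ∈ armPoints a μ, LinearIndependent ℂ (fun i : Xp a μ p => a i))
    (i : Fin (m' + 1)) (q : Fin n → ℂ) :
    q ∈ armPoints (a ∘ i.succAbove) (μ ∘ i.succAbove) ↔
      q ∈ armPoints a μ ∧ i ∉ Xp a μ q := by
  have himg : (a ∘ i.succAbove) '' Xp (a ∘ i.succAbove) (μ ∘ i.succAbove) q
      = a '' (Xp a μ q \ {i}) := by
    have hpre : Xp (a ∘ i.succAbove) (μ ∘ i.succAbove) q = i.succAbove ⁻¹' (Xp a μ q) := rfl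
    rw [hpre, Set.image_comp, Set.image_preimage_eq_inter_range, Fin.range_succAbove,
      ← Set.diff_eq]
  constructor
  · intro hq
    have hsp : Submodule.span ℂ (a '' (Xp a μ q \ {i})) = ⊤ := by
      rw [← himg]; exact hq
    have hqP : q ∈ armPoints a μ := by
      show Submodule.span ℂ (a '' Xp a μ q) = ⊤
      rw [eq_top_iff, ← hsp]
      exact Submodule.span_mono (Set.image_mono Set.diff_subset)
    refine ⟨hqP, fun hiX => ?_⟩
    have hli := hgen q hqP
    have hnot := hli.notMem_span_image
      (s := {x : Xp a μ q | (x : Fin (m' + 1)) ≠ i}) (x := ⟨i, hiX⟩) (by simp)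
    apply hnot
    have himg2 : (fun x : Xp a μ q => a x) '' {x : Xp a μ q | (x : Fin (m' + 1)) ≠ i}
        = a '' (Xp a μ q \ {i}) := by
      ext v
      constructor
      · rintro ⟨⟨x, hx⟩, hx2, rfl⟩; exact ⟨x, ⟨hx, hx2⟩, rfl⟩
      · rintro ⟨x, ⟨hx, hx2⟩, rfl⟩; exact ⟨⟨x, hx⟩, hx2, rfl⟩
    rw [himg2, hsp]
    exact Submodule.mem_top
  · rintro ⟨hqP, hiX⟩
    show Submodule.span ℂ _ = ⊤
    rw [himg, Set.diff_singleton_eq_self hiX]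
    exact hqP

set_option maxHeartbeats 1000000 in
lemma hgen_comp {m' : ℕ} (a : Fin (m' + 1) → (Fin n → ℂ)) (μ : Fin (m' + 1) → ℂ)
    (hgen : ∀ p ∈ armPoints a μ, LinearIndependent ℂ (fun i : Xp a μ p => a i))
    (i : Fin (m' + 1)) :
    ∀ q ∈ armPoints (a ∘ i.succAbove) (μ ∘ i.succAbove),
      LinearIndependent ℂ
        (fun k : Xp (a ∘ i.succAbove) (μ ∘ i.succAbove) q => (a ∘ i.succAbove) k) := by
  intro q hq
  have hqP : q ∈ armPoints a μ := ((armPoints_comp a μ hgen i q).mp hq).1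
  have hli := hgen q hqP
  have hg : ∀ k : Xp (a ∘ i.succAbove) (μ ∘ i.succAbove) q,
      i.succAbove k.1 ∈ Xp a μ q := fun k => k.2
  let g : Xp (a ∘ i.succAbove) (μ ∘ i.succAbove) q → Xp a μ q :=
    fun k => ⟨i.succAbove k.1, hg k⟩
  have hinj : Function.Injective g := by
    intro k₁ k₂ h
    exact Subtype.ext (Fin.succAbove_right_injective (congrArg Subtype.val h))
  exact hli.comp g hinj

end AuxiliaryLemmas

set_option maxHeartbeats 1000000 in
/-- Original Formula 8.5, valid in the generic case: if for every point `p` of the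
arrangement the vectors `{a i : i ∈ X_p}` are linearly independent (hence a basis of
`ℂ^n`), then in `K = ℂ(x_1, …, x_n)` one has
`∏ i, 1/(a i + μ i)
  = ∑_{p ∈ P(X,μ)} (∏_{i ∉ X_p} 1/(⟨a i | p⟩ + μ i)) ∏_{i ∈ X_p} 1/(a i + μ i)`. -/
theorem generic_formula_8_5 {n m : ℕ} (a : Fin m → (Fin n → ℂ)) (μ : Fin m → ℂ)
    (ha : ∀ i, a i ≠ 0)
    (hspan : Submodule.span ℂ (Set.range a) = ⊤)
    (hgen : ∀ p ∈ armPoints a μ, LinearIndependent ℂ (fun i : Xp a μ p => a i)) :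
    ∏ i, (affForm a μ i)⁻¹ =
      ∑ᶠ p ∈ armPoints a μ,
        algebraMap (MvPolynomial (Fin n) ℂ) (FractionRing (MvPolynomial (Fin n) ℂ))
            (C (∏ i ∈ (XpFinset a μ p)ᶜ, ((∑ j, a i j * p j) + μ i)⁻¹)) *
          ∏ i ∈ XpFinset a μ p, (affForm a μ i)⁻¹ := by
  induction m with
  | zero => exact indep_case a μ hspan linearIndependent_empty_type
  | succ m' ih =>
    by_cases hind : LinearIndependent ℂ a
    · exact indep_case a μ hspan hind
    by_cases hex : ∃ c : Fin (m' + 1) → ℂ, (∑ i, c i • a i = 0) ∧ ∑ i, c i * μ i ≠ 0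
    swap
    · -- no relation with nonzero μ-sum: there is a common point, contradicting genericity
      push_neg at hex
      obtain ⟨p₀, hp₀⟩ := exists_common_point hex
      have hXp₀ : Xp a μ p₀ = Set.univ := by ext i; simpa [Xp] using hp₀ i
      have hp₀P : p₀ ∈ armPoints a μ := by
        show Submodule.span ℂ (a '' Xp a μ p₀) = ⊤
        rw [hXp₀, Set.image_univ, hspan]
      have hli := hgen p₀ hp₀P
      exfalso
      apply hind
      let g : Fin (m' + 1) → Xp a μ p₀ := fun j => ⟨j, by rw [hXp₀]; trivial⟩
      have hinj : Function.Injective g := fun x y h => congrArg Subtype.val h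
      exact hli.comp g hinj
    · -- main inductive case
      obtain ⟨c₀, hc₀rel, hc₀s⟩ := hex
      set s₀ := ∑ i, c₀ i * μ i with hs₀
      set c : Fin (m' + 1) → ℂ := fun i => s₀⁻¹ * c₀ i with hc
      have hrel : ∑ i, c i • a i = 0 := by
        have : ∀ i, c i • a i = s₀⁻¹ • (c₀ i • a i) := fun i => by
          rw [hc]; rw [mul_smul]
        rw [Finset.sum_congr rfl fun i _ => this i, ← Finset.smul_sum, hc₀rel, smul_zero]
      have hμsum : ∑ i, c i * μ i = 1 := by
        have : ∀ i, c i * μ i = s₀⁻¹ * (c₀ i * μ i) := fun i => by rw [hc]; ring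
        rw [Finset.sum_congr rfl fun i _ => this i, ← Finset.mul_sum, ← hs₀,
          inv_mul_cancel₀ hc₀s]
      -- Step A : `∑ i, c i * (a i + μ i) = 1` in K
      have hone : ∑ i, (algebraMap (MvPolynomial (Fin n) ℂ)
            (FractionRing (MvPolynomial (Fin n) ℂ))) (C (c i)) * affForm a μ i = 1 := by
        have h1 : ∀ i, (algebraMap (MvPolynomial (Fin n) ℂ)
              (FractionRing (MvPolynomial (Fin n) ℂ))) (C (c i)) * affForm a μ i
            = (algebraMap (MvPolynomial (Fin n) ℂ) (FractionRing (MvPolynomial (Fin n) ℂ)))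
                (C (c i) * (linForm (a i) + C (μ i))) := by
          intro i
          exact (map_mul (algebraMap (MvPolynomial (Fin n) ℂ)
            (FractionRing (MvPolynomial (Fin n) ℂ))) (C (c i))
            (linForm (a i) + C (μ i))).symm
        rw [Finset.sum_congr rfl fun i _ => h1 i, ← map_sum]
        have hp : (∑ i, C (c i) * (linForm (a i) + C (μ i)) : MvPolynomial (Fin n) ℂ) = 1 := by
          have h2 : ∀ i, (C (c i) * (linForm (a i) + C (μ i)) : MvPolynomial (Fin n) ℂ)
              = C (c i) * linForm (a i) + C (c i * μ i) := by
            intro i; rw [mul_add, ← map_mul]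
          rw [Finset.sum_congr rfl fun i _ => h2 i, Finset.sum_add_distrib,
            ← linForm_sum_smul, hrel, ← map_sum, hμsum]
          simp [linForm]
        rw [hp, map_one]
      -- Step B : split the product
      have hsplit : ∏ i, (affForm a μ i)⁻¹
          = ∑ i, (algebraMap (MvPolynomial (Fin n) ℂ)
              (FractionRing (MvPolynomial (Fin n) ℂ))) (C (c i)) *
              ∏ k, (affForm a μ (i.succAbove k))⁻¹ := by
        have hterm : ∀ i : Fin (m' + 1),
            (algebraMap (MvPolynomial (Fin n) ℂ) (FractionRing (MvPolynomial (Fin n) ℂ)))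
                (C (c i)) * ∏ k, (affForm a μ (i.succAbove k))⁻¹
            = ((algebraMap (MvPolynomial (Fin n) ℂ) (FractionRing (MvPolynomial (Fin n) ℂ)))
                (C (c i)) * affForm a μ i) * ∏ j, (affForm a μ j)⁻¹ := by
          intro i
          rw [Fin.prod_univ_succAbove (fun j => (affForm a μ j)⁻¹) i]
          rw [mul_assoc, ← mul_assoc (affForm a μ i),
            mul_inv_cancel₀ (affForm_ne_zero (ha i)), one_mul]
        rw [Finset.sum_congr rfl fun i _ => hterm i, ← Finset.sum_mul, hone, one_mul]
      -- Step C : finiteness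
      have hPf : (armPoints a μ).Finite := armPoints_finite a μ
      -- Step D : rewrite each sub-product via the induction hypothesis
      have hA : ∀ i : Fin (m' + 1), c i ≠ 0 →
          ∏ k, (affForm a μ (i.succAbove k))⁻¹
            = ∑ q ∈ hPf.toFinset,
                (if i ∈ XpFinset a μ q then 0 else
                  (algebraMap (MvPolynomial (Fin n) ℂ) (FractionRing (MvPolynomial (Fin n) ℂ)))
                    (C (∏ j ∈ ((XpFinset a μ q)ᶜ).erase i, ((∑ j', a j j' * q j') + μ j)⁻¹)) *
                    ∏ j ∈ XpFinset a μ q, (affForm a μ j)⁻¹) := by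
        intro i hci
        have ha' : ∀ k, (a ∘ i.succAbove) k ≠ 0 := fun k => ha _
        have hspan' : Submodule.span ℂ (Set.range (a ∘ i.succAbove)) = ⊤ := by
          rw [eq_top_iff, ← hspan, Submodule.span_le]
          rintro v ⟨j, rfl⟩
          by_cases hj : j = i
          · subst hj
            have hsum := Fin.sum_univ_succAbove (fun t => c t • a t) j
            rw [hrel] at hsum
            have h1 : c j • a j = -∑ k, c (j.succAbove k) • a (j.succAbove k) :=
              eq_neg_of_add_eq_zero_left hsum.symm
            have h2 : a j = (c j)⁻¹ • (c j • a j) := by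
              rw [smul_smul, inv_mul_cancel₀ hci, one_smul]
            rw [h2, h1]
            exact Submodule.smul_mem _ _ (Submodule.neg_mem _ (Submodule.sum_mem _ fun k _ =>
              Submodule.smul_mem _ _ (Submodule.subset_span ⟨k, rfl⟩)))
          · obtain ⟨k, hk⟩ := Fin.exists_succAbove_eq hj
            exact Submodule.subset_span ⟨k, by simp [hk]⟩
        have hgen' := hgen_comp a μ hgen i
        have hIH := ih (a ∘ i.succAbove) (μ ∘ i.succAbove) ha' hspan' hgen'
        -- identify the sub-arrangement points
        have hP' : armPoints (a ∘ i.succAbove) (μ ∘ i.succAbove)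
            = ↑(hPf.toFinset.filter fun q => i ∉ XpFinset a μ q) := by
          ext q
          rw [armPoints_comp a μ hgen i q, Finset.coe_filter, Set.mem_setOf_eq,
            Set.Finite.mem_toFinset]
          constructor
          · rintro ⟨h1, h2⟩; exact ⟨h1, fun hm => h2 (mem_Xp'.mpr (mem_XpFinset.mp hm))⟩
          · rintro ⟨h1, h2⟩; exact ⟨h1, fun hm => h2 (mem_XpFinset.mpr (mem_Xp'.mp hm))⟩
        rw [hP', finsum_mem_coe_finset] at hIH
        have hmem : ∀ (q : Fin n → ℂ) (k : Fin m'),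
            k ∈ XpFinset (a ∘ i.succAbove) (μ ∘ i.succAbove) q
              ↔ i.succAbove k ∈ XpFinset a μ q := fun q k => by
          rw [mem_XpFinset, mem_XpFinset]
          exact Iff.rfl
        calc ∏ k, (affForm a μ (i.succAbove k))⁻¹
            = ∏ k, (affForm (a ∘ i.succAbove) (μ ∘ i.succAbove) k)⁻¹ := rfl
          _ = _ := hIH
          _ = ∑ q ∈ hPf.toFinset, (if i ∈ XpFinset a μ q then 0 else
                (algebraMap (MvPolynomial (Fin n) ℂ) (FractionRing (MvPolynomial (Fin n) ℂ)))
                  (C (∏ j ∈ ((XpFinset a μ q)ᶜ).erase i, ((∑ j', a j j' * q j') + μ j)⁻¹)) *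
                  ∏ j ∈ XpFinset a μ q, (affForm a μ j)⁻¹) := by
              rw [Finset.sum_filter]
              refine Finset.sum_congr rfl fun q hq => ?_
              by_cases hiq : i ∈ XpFinset a μ q
              · rw [if_neg (fun h => h hiq), if_pos hiq]
              · rw [if_pos hiq, if_neg hiq]
                -- transform the two products
                have hF1 : Finset.image i.succAbove
                    (XpFinset (a ∘ i.succAbove) (μ ∘ i.succAbove) q) = XpFinset a μ q := by
                  ext j
                  simp only [Finset.mem_image]
                  constructor
                  · rintro ⟨k, hk, rfl⟩; exact (hmem q k).mp hk
                  · intro hj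
                    have hji : j ≠ i := fun h => hiq (h ▸ hj)
                    obtain ⟨k, hk⟩ := Fin.exists_succAbove_eq hji
                    exact ⟨k, (hmem q k).mpr (by rw [hk]; exact hj), hk⟩
                have hF2 : Finset.image i.succAbove
                    ((XpFinset (a ∘ i.succAbove) (μ ∘ i.succAbove) q)ᶜ)
                    = ((XpFinset a μ q)ᶜ).erase i := by
                  ext j
                  simp only [Finset.mem_image, Finset.mem_compl, Finset.mem_erase]
                  constructor
                  · rintro ⟨k, hk, rfl⟩
                    exact ⟨Fin.succAbove_ne i k, fun h => hk ((hmem q k).mpr h)⟩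
                  · rintro ⟨hji, hj⟩
                    obtain ⟨k, hk⟩ := Fin.exists_succAbove_eq hji
                    exact ⟨k, fun h => hj (by rw [← hk]; exact (hmem q k).mp h), hk⟩
                have hinj : ∀ x ∈ (XpFinset (a ∘ i.succAbove) (μ ∘ i.succAbove) q)ᶜ,
                    ∀ y ∈ (XpFinset (a ∘ i.succAbove) (μ ∘ i.succAbove) q)ᶜ,
                    i.succAbove x = i.succAbove y → x = y :=
                  fun x _ y _ h => Fin.succAbove_right_injective h
                have hinj2 : ∀ x ∈ XpFinset (a ∘ i.succAbove) (μ ∘ i.succAbove) q,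
                    ∀ y ∈ XpFinset (a ∘ i.succAbove) (μ ∘ i.succAbove) q,
                    i.succAbove x = i.succAbove y → x = y :=
                  fun x _ y _ h => Fin.succAbove_right_injective h
                have hp1 : ∏ k ∈ (XpFinset (a ∘ i.succAbove) (μ ∘ i.succAbove) q)ᶜ,
                    ((∑ j', (a ∘ i.succAbove) k j' * q j') + (μ ∘ i.succAbove) k)⁻¹
                    = ∏ j ∈ ((XpFinset a μ q)ᶜ).erase i, ((∑ j', a j j' * q j') + μ j)⁻¹ := by
                  rw [← hF2, Finset.prod_image hinj]
                  rfl
                have hp2 : ∏ k ∈ XpFinset (a ∘ i.succAbove) (μ ∘ i.succAbove) q,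
                    (affForm (a ∘ i.succAbove) (μ ∘ i.succAbove) k)⁻¹
                    = ∏ j ∈ XpFinset a μ q, (affForm a μ j)⁻¹ := by
                  rw [← hF1, Finset.prod_image hinj2]
                  rfl
                rw [hp1, hp2]
      -- Step E : assemble
      rw [hsplit, finsum_mem_eq_finite_toFinset_sum _ hPf]
      have hstep : ∀ i : Fin (m' + 1),
          (algebraMap (MvPolynomial (Fin n) ℂ) (FractionRing (MvPolynomial (Fin n) ℂ)))
              (C (c i)) * ∏ k, (affForm a μ (i.succAbove k))⁻¹
          = ∑ q ∈ hPf.toFinset,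
              (algebraMap (MvPolynomial (Fin n) ℂ) (FractionRing (MvPolynomial (Fin n) ℂ)))
                (C (c i)) *
              (if i ∈ XpFinset a μ q then 0 else
                (algebraMap (MvPolynomial (Fin n) ℂ) (FractionRing (MvPolynomial (Fin n) ℂ)))
                  (C (∏ j ∈ ((XpFinset a μ q)ᶜ).erase i, ((∑ j', a j j' * q j') + μ j)⁻¹)) *
                  ∏ j ∈ XpFinset a μ q, (affForm a μ j)⁻¹) := by
        intro i
        by_cases hci : c i = 0
        · simp [hci]
        · rw [hA i hci, Finset.mul_sum]
      rw [Finset.sum_congr rfl fun i _ => hstep i, Finset.sum_comm]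
      refine Finset.sum_congr rfl fun q hq => ?_
      have hqP : q ∈ armPoints a μ := hPf.mem_toFinset.mp hq
      -- the ℂ-coefficient computation
      have he0 : ∀ j ∈ (XpFinset a μ q)ᶜ, ((∑ j', a j j' * q j') + μ j) ≠ 0 :=
        fun j hj h => (Finset.mem_compl.mp hj) (mem_XpFinset.mpr h)
      have hall : ∑ j, c j * ((∑ j', a j j' * q j') + μ j) = 1 := by
        have h1 : ∀ j, c j * ((∑ j', a j j' * q j') + μ j)
            = (∑ j', c j * a j j' * q j') + c j * μ j := by
          intro j
          rw [mul_add, Finset.mul_sum]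
          congr 1
          exact Finset.sum_congr rfl fun j' _ => by ring
        rw [Finset.sum_congr rfl fun j _ => h1 j, Finset.sum_add_distrib, hμsum]
        have h2 : ∑ j, ∑ j', c j * a j j' * q j' = 0 := by
          rw [Finset.sum_comm]
          have h3 : ∀ j', ∑ j, c j * a j j' * q j' = 0 := by
            intro j'
            have h4 := congrFun hrel j'
            simp only [Finset.sum_apply, Pi.smul_apply, smul_eq_mul, Pi.zero_apply] at h4
            rw [← Finset.sum_mul]
            rw [show (∑ j, c j * a j j') = 0 from h4, zero_mul]
          exact Finset.sum_eq_zero fun j' _ => h3 j'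
        rw [h2, zero_add]
      have hesum : ∑ j ∈ (XpFinset a μ q)ᶜ, c j * ((∑ j', a j j' * q j') + μ j) = 1 := by
        have hz : ∑ j ∈ XpFinset a μ q, c j * ((∑ j', a j j' * q j') + μ j) = 0 :=
          Finset.sum_eq_zero fun j hj => by rw [mem_XpFinset.mp hj, mul_zero]
        have := Finset.sum_add_sum_compl (XpFinset a μ q)
          (fun j => c j * ((∑ j', a j j' * q j') + μ j))
        rw [hall, hz, zero_add] at this
        exact this
      have hkey := coeff_identity ((XpFinset a μ q)ᶜ) c
        (fun j => (∑ j', a j j' * q j') + μ j) he0 hesum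
      -- now compute the inner sum
      calc ∑ i, (algebraMap (MvPolynomial (Fin n) ℂ) (FractionRing (MvPolynomial (Fin n) ℂ)))
              (C (c i)) *
            (if i ∈ XpFinset a μ q then 0 else
              (algebraMap (MvPolynomial (Fin n) ℂ) (FractionRing (MvPolynomial (Fin n) ℂ)))
                (C (∏ j ∈ ((XpFinset a μ q)ᶜ).erase i, ((∑ j', a j j' * q j') + μ j)⁻¹)) *
                ∏ j ∈ XpFinset a μ q, (affForm a μ j)⁻¹)
          = ∑ i, (if i ∈ XpFinset a μ q then 0 else
              (algebraMap (MvPolynomial (Fin n) ℂ) (FractionRing (MvPolynomial (Fin n) ℂ)))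
                (C (c i * ∏ j ∈ ((XpFinset a μ q)ᶜ).erase i, ((∑ j', a j j' * q j') + μ j)⁻¹))) *
                ∏ j ∈ XpFinset a μ q, (affForm a μ j)⁻¹ := by
            refine Finset.sum_congr rfl fun i _ => ?_
            by_cases hiq : i ∈ XpFinset a μ q
            · rw [if_pos hiq, if_pos hiq, mul_zero, zero_mul]
            · rw [if_neg hiq, if_neg hiq, ← mul_assoc, ← map_mul, ← map_mul]
        _ = (∑ i ∈ (XpFinset a μ q)ᶜ,
              (algebraMap (MvPolynomial (Fin n) ℂ) (FractionRing (MvPolynomial (Fin n) ℂ)))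
                (C (c i * ∏ j ∈ ((XpFinset a μ q)ᶜ).erase i, ((∑ j', a j j' * q j') + μ j)⁻¹))) *
                ∏ j ∈ XpFinset a μ q, (affForm a μ j)⁻¹ := by
            rw [← Finset.sum_mul]
            congr 1
            rw [← Finset.sum_add_sum_compl (XpFinset a μ q)]
            rw [Finset.sum_eq_zero (fun i hi => if_pos hi), zero_add]
            exact Finset.sum_congr rfl fun i hi => if_neg (Finset.mem_compl.mp hi)
        _ = (algebraMap (MvPolynomial (Fin n) ℂ) (FractionRing (MvPolynomial (Fin n) ℂ)))
              (C (∏ i ∈ (XpFinset a μ q)ᶜ, ((∑ j, a i j * q j) + μ i)⁻¹)) *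
            ∏ i ∈ XpFinset a μ q, (affForm a μ i)⁻¹ := by
            rw [← map_sum, ← map_sum, hkey]
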